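/- The scalar curvature function S(x, y, z) = 4/x + 4/y + 4/z − 2z/(xy) − 2y/(xz) − 2x/(yz) + 16n(n+2)(xyz)^{1/(4n)} − 4n(x+y+z)(xyz)^{1/(2n)} on positive reals has exactly two critical points of the form x = y = z = c with gradient parallel to (1,1,1) giving Einstein metrics: c = 1 (the round metric) and c = (2n+3)^{−4n/(4n+3)} (Jensen's second Einstein metric). That is, both points x = y = z = 1 and x = y = z = (2n+3)^{−4n/(4n+3)} satisfy r_i = r_j = r_k = r_h where r_i, r_j, r_k, r_h are the Ricci eigenvalues with s = (xyz)^{−1/(4n)}. -/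

import Mathlib

/-- Among metrics with `x = y = z = c` (and `s = (xyz)^{-1/(4n)}`), the Einstein
condition `r_i = r_j = r_k = r_h` holds exactly for `c = 1` (round metric) and
`c = (2n+3)^{-4n/(4n+3)}` (Jensen's second Einstein metric). -/
theorem einstein_points (n : ℕ) (hn : 1 ≤ n) (c : ℝ) (hc : 0 < c) :
    let s : ℝ := (c*c*c) ^ (-(1 / (4*(n:ℝ))))
    let ri : ℝ := 2 * ((c^2 - c^2 - c^2) / (c*c*c)) + 4/c + 4*n*c/s^2
    let rj : ℝ := 2 * ((c^2 - c^2 - c^2) / (c*c*c)) + 4/c + 4*n*c/s^2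
    let rk : ℝ := 2 * ((c^2 - c^2 - c^2) / (c*c*c)) + 4/c + 4*n*c/s^2
    let rh : ℝ := -2 * ((c + c + c) / s^2) + (4*n + 8)/s
    (ri = rj ∧ rj = rk ∧ rk = rh)
      ↔ (c = 1 ∨ c = (2*(n:ℝ)+3) ^ (-(4*(n:ℝ)) / (4*(n:ℝ)+3))) := by
  intro s ri rj rk rh
  have ha : (1:ℝ) ≤ (n:ℝ) := by exact_mod_cast hn
  set a : ℝ := (n:ℝ) with ha_def
  have ha0 : 0 < a := by linarith
  have h4a : (4*a) ≠ 0 := by positivity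
  have h4a3 : (4*a+3) ≠ 0 := by positivity
  have h2a3 : (0:ℝ) < 2*a+3 := by linarith
  have hc0 : c ≠ 0 := ne_of_gt hc
  have hcle : (0:ℝ) ≤ c := hc.le
  set e : ℝ := 1 + 3/(4*a) with he_def
  have he' : e = (4*a+3)/(4*a) := by rw [he_def]; field_simp
  have he0 : e ≠ 0 := by
    rw [he']; exact div_ne_zero h4a3 h4a
  set u : ℝ := c ^ e with hu_def
  have hu_pos : 0 < u := Real.rpow_pos_of_pos hc e
  -- s as a power of c
  have hs : s = c ^ (-(3/(4*a))) := by
    show (c*c*c) ^ (-(1/(4*a))) = _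
    have h3 : c*c*c = c ^ ((3:ℕ):ℝ) := by
      rw [Real.rpow_natCast]; ring
    rw [h3, ← Real.rpow_mul hcle]
    congr 1
    push_cast
    ring
  have hs2 : s^2 = c ^ (-(3/(2*a))) := by
    rw [hs, sq, ← Real.rpow_add hc]
    rw [show -(3/(4*a)) + -(3/(4*a)) = -(3/(2*a)) by field_simp; ring]
  have hane : a ≠ 0 := ha0.ne'
  -- c² / s² = u²
  have f2 : c*c/s^2 = u^2 := by
    have h1 : c ^ ((3:ℝ)/(2*a)) = c ^ ((3:ℝ)/(4*a)) * c ^ ((3:ℝ)/(4*a)) := by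
      rw [← Real.rpow_add hc]
      congr 1
      field_simp [hane]
      ring
    rw [hs2, Real.rpow_neg hcle, div_eq_mul_inv, inv_inv, hu_def, he_def, sq,
      Real.rpow_add hc, Real.rpow_one, h1]
    ring
  -- c / s = u
  have f1 : c/s = u := by
    rw [hs, Real.rpow_neg hcle, div_eq_mul_inv, inv_inv, hu_def, he_def,
      Real.rpow_add hc, Real.rpow_one]
  have hs0 : s ≠ 0 := by
    rw [hs]; exact (Real.rpow_pos_of_pos hc _).ne'
  -- multiply the Einstein condition by c
  have hck : c * rk = 2 + 4*a*u^2 := by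
    show c * (2 * ((c^2 - c^2 - c^2) / (c*c*c)) + 4/c + 4*a*c/s^2) = _
    have : c * (4*a*c/s^2) = 4*a*(c*c/s^2) := by ring
    rw [mul_add, this, f2]
    field_simp
    ring
  have hch : c * rh = -6*u^2 + (4*a+8)*u := by
    show c * (-2 * ((c + c + c) / s^2) + (4*a + 8)/s) = _
    have h1 : c * (-2 * ((c + c + c) / s^2)) = -6*(c*c/s^2) := by ring
    have h2 : c * ((4*a + 8)/s) = (4*a+8)*(c/s) := by ring
    rw [mul_add, h1, h2, f1, f2]
  have main : rk = rh ↔ (c = 1 ∨ c = (2*a+3) ^ (-(4*a) / (4*a+3))) := by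
    rw [show (rk = rh) ↔ (c * rk = c * rh) from
      ⟨fun h => by rw [h], fun h => mul_left_cancel₀ hc0 h⟩, hck, hch]
    have hquad : (2 + 4*a*u^2 = -6*u^2 + (4*a+8)*u) ↔ (u - 1) * ((4*a+6)*u - 2) = 0 :=
      ⟨fun h => by nlinarith, fun h => by nlinarith⟩
    rw [hquad, mul_eq_zero, sub_eq_zero, sub_eq_zero]
    constructor
    · rintro (h1 | h2)
      · left
        have := congrArg (· ^ e⁻¹) h1
        simpa [hu_def, Real.rpow_rpow_inv hcle he0] using this
      · right
        have hu2 : u = (2*a+3)⁻¹ := by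
          field_simp at h2 ⊢
          linarith
        have := congrArg (· ^ e⁻¹) hu2
        simp only [hu_def, Real.rpow_rpow_inv hcle he0] at this
        rw [this, ← Real.rpow_neg_one (2*a+3), ← Real.rpow_mul h2a3.le]
        congr 1
        rw [he']
        field_simp
    · rintro (h1 | h2)
      · left; rw [hu_def, h1, Real.one_rpow]
      · right
        have : u = (2*a+3) ^ ((-(4*a) / (4*a+3)) * e) := by
          rw [hu_def, h2, ← Real.rpow_mul h2a3.le]
        rw [this, show (-(4*a) / (4*a+3)) * e = -1 by rw [he']; field_simp,
          Real.rpow_neg_one]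
        field_simp
        linarith
  constructor
  · rintro ⟨-, -, h⟩
    exact main.mp h
  · intro h
    exact ⟨rfl, rfl, main.mpr h⟩
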